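/- Let F be a k-regular biset-family on a finite set T with k < |T|, and suppose that for every possible edge e on T, ν(F^k restricted to members not covered by e) = ν(F^k). Then ν(F^k) ≤ |T|/(|T|−k), i.e., (|T|−k)·ν(F^k) ≤ |T|. -/

import Mathlib

open Finset
open scoped Classical

/-- A biset on ground set `T` is a pair `(X, X⁺)` with `X ⊆ X⁺ ⊆ T`. -/
def IsBisetOn {α : Type*} (T : Finset α) (A : Finset α × Finset α) : Prop :=
  A.1 ⊆ A.2 ∧ A.2 ⊆ T

/-- `k`-regular biset-family. -/
def KRegular {α : Type*} [DecidableEq α] (T : Finset α) (k : ℕ)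
    (F : Finset (Finset α × Finset α)) : Prop :=
  (∀ A ∈ F, (A.2 \ A.1).card ≤ k) ∧
  ∀ A ∈ F, ∀ B ∈ F, (A.1 ∩ B.1).Nonempty → (A.1 ∪ B.1).card + k + 1 ≤ T.card →
    (A.1 ∩ B.1, A.2 ∩ B.2) ∈ F ∧ (A.1 ∪ B.1, A.2 ∪ B.2) ∈ F

/-- `F^k`: members with `2|X| ≤ |T| - k`. -/
def smallPart {α : Type*} [DecidableEq α] (T : Finset α) (k : ℕ)
    (F : Finset (Finset α × Finset α)) : Finset (Finset α × Finset α) :=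
  F.filter fun A => 2 * A.1.card + k ≤ T.card

/-- An edge `(u,v)` covers `(X,X⁺)` if `u ∈ X` and `v ∈ T \ X⁺`. -/
def EdgeCovers {α : Type*} [DecidableEq α] (T : Finset α) (e : α × α)
    (A : Finset α × Finset α) : Prop :=
  e.1 ∈ A.1 ∧ e.2 ∈ T \ A.2

/-- `ν`: maximum number of members with pairwise-disjoint inner parts. -/
noncomputable def nuBiset {α : Type*} [DecidableEq α]
    (F : Finset (Finset α × Finset α)) : ℕ :=
  F.powerset.sup fun G =>
    if (G : Set (Finset α × Finset α)).Pairwise (fun A B => Disjoint A.1 B.1)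
    then G.card else 0

section Aux

variable {α : Type*} [DecidableEq α]

lemma nu_le (F G : Finset (Finset α × Finset α)) (hG : G ⊆ F)
    (hpd : (G : Set (Finset α × Finset α)).Pairwise (fun A B => Disjoint A.1 B.1)) :
    G.card ≤ nuBiset F := by
  have h := Finset.le_sup (f := fun G : Finset (Finset α × Finset α) =>
    if (G : Set (Finset α × Finset α)).Pairwise (fun A B => Disjoint A.1 B.1)
    then G.card else 0) (Finset.mem_powerset.2 hG)
  rw [nuBiset]
  simpa only [hpd, if_true] using h

lemma nu_witness (F : Finset (Finset α × Finset α)) :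
    ∃ G, G ⊆ F ∧ (G : Set (Finset α × Finset α)).Pairwise (fun A B => Disjoint A.1 B.1) ∧
      G.card = nuBiset F := by
  obtain ⟨G, hG, hEq⟩ := Finset.exists_mem_eq_sup F.powerset ⟨∅, Finset.empty_mem_powerset F⟩
    (fun G : Finset (Finset α × Finset α) =>
      if (G : Set (Finset α × Finset α)).Pairwise (fun A B => Disjoint A.1 B.1)
      then G.card else 0)
  by_cases hp : (G : Set (Finset α × Finset α)).Pairwise (fun A B => Disjoint A.1 B.1)
  · exact ⟨G, Finset.mem_powerset.1 hG, hp, by rw [nuBiset, hEq, if_pos hp]⟩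
  · refine ⟨∅, by simp, by simp, ?_⟩
    rw [nuBiset, hEq, if_neg hp]
    simp

lemma subset_sup' {β : Type*} {s : Finset β} {f : β → Finset α} {b : β}
    (hb : b ∈ s) : f b ⊆ s.sup f := Finset.le_sup hb

lemma sup_subset' {β : Type*} {s : Finset β} {f : β → Finset α} {t : Finset α}
    (h : ∀ b ∈ s, f b ⊆ t) : s.sup f ⊆ t := Finset.sup_le h

lemma sup_subset_sup' {β : Type*} {s₁ s₂ : Finset β} {f : β → Finset α}
    (h : s₁ ⊆ s₂) : s₁.sup f ⊆ s₂.sup f := Finset.sup_mono h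

end Aux

/-- If no single edge on `T` decreases `ν(F^k)`, then `ν(F^k) ≤ |T|/(|T|-k)`,
i.e. `(|T|-k)·ν(F^k) ≤ |T|`. -/
theorem stmt_7 {α : Type*} [DecidableEq α] (T : Finset α) (k : ℕ) (hk : k < T.card)
    (F : Finset (Finset α × Finset α))
    (hB : ∀ A ∈ F, IsBisetOn T A)
    (hne : ∀ A ∈ F, A.1.Nonempty)
    (hreg : KRegular T k F)
    (hyp : ∀ u ∈ T, ∀ v ∈ T,
      nuBiset ((smallPart T k F).filter fun A => ¬ EdgeCovers T (u, v) A)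
        = nuBiset (smallPart T k F)) :
    (T.card - k) * nuBiset (smallPart T k F) ≤ T.card := by
  classical
  set Fk : Finset (Finset α × Finset α) := smallPart T k F with hFkdef
  have hFkF : Fk ⊆ F := Finset.filter_subset _ _
  have hFkmem : ∀ A, A ∈ Fk ↔ A ∈ F ∧ 2 * A.1.card + k ≤ T.card := by
    intro A; rw [hFkdef, smallPart, Finset.mem_filter]
  -- crossing lemma inside Fk
  have hcross : ∀ A ∈ Fk, ∀ B ∈ Fk, (A.1 ∩ B.1).Nonempty →
      (A.1 ∩ B.1, A.2 ∩ B.2) ∈ Fk ∧ (A.1 ∪ B.1, A.2 ∪ B.2) ∈ F := by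
    intro A hA B hB' hint
    have hA' := ((hFkmem A).1 hA).2
    have hB2 := ((hFkmem B).1 hB').2
    have hi : 1 ≤ (A.1 ∩ B.1).card := Finset.card_pos.2 hint
    have hu : (A.1 ∪ B.1).card + (A.1 ∩ B.1).card = A.1.card + B.1.card :=
      Finset.card_union_add_card_inter _ _
    have hsz : (A.1 ∪ B.1).card + k + 1 ≤ T.card := by omega
    have h2 := hreg.2 A (hFkF hA) B (hFkF hB') hint hsz
    refine ⟨(hFkmem _).2 ⟨h2.1, ?_⟩, h2.2⟩
    have hle : (A.1 ∩ B.1).card ≤ A.1.card :=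
      Finset.card_le_card Finset.inter_subset_left
    simpa using by omega
  -- inner parts and cores
  set S : Finset (Finset α) := Fk.image Prod.fst with hSdef
  set Cores : Finset (Finset α) := S.filter (fun C => ∀ X ∈ S, X ⊆ C → X = C)
    with hCdef
  have hCmem : ∀ C, C ∈ Cores ↔ C ∈ S ∧ ∀ X ∈ S, X ⊆ C → X = C := by
    intro C; rw [hCdef, Finset.mem_filter]
  have hSmem : ∀ X, X ∈ S ↔ ∃ A ∈ Fk, A.1 = X := by
    intro X; rw [hSdef, Finset.mem_image]
  -- every inner part contains a core
  have hcoreEx : ∀ X ∈ S, ∃ C ∈ Cores, C ⊆ X := by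
    intro X hX
    obtain ⟨m, hm, hmin⟩ : ∃ m ∈ S.filter (· ⊆ X), ∀ x ∈ S.filter (· ⊆ X), ¬ x < m := by
      obtain ⟨m, hm⟩ := Finset.exists_minimal (s := S.filter (· ⊆ X))
        ⟨X, Finset.mem_filter.2 ⟨hX, Finset.Subset.refl X⟩⟩
      exact ⟨m, hm.prop, fun x hx hlt => hm.not_lt hx hlt⟩
    rw [Finset.mem_filter] at hm
    refine ⟨m, (hCmem m).2 ⟨hm.1, ?_⟩, hm.2⟩
    intro Y hY hYm
    by_contra hne'
    exact hmin Y (Finset.mem_filter.2 ⟨hY, hYm.trans hm.2⟩)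
      (Finset.ssubset_iff_subset_ne.2 ⟨hYm, hne'⟩)
  -- cores are nonempty
  have hcoreNe : ∀ C ∈ Cores, C.Nonempty := by
    intro C hC
    obtain ⟨A, hA, rfl⟩ := (hSmem C).1 ((hCmem C).1 hC).1
    exact hne A (hFkF hA)
  have hcoreT : ∀ C ∈ Cores, C ⊆ T := by
    intro C hC
    obtain ⟨A, hA, rfl⟩ := (hSmem C).1 ((hCmem C).1 hC).1
    exact (hB A (hFkF hA)).1.trans (hB A (hFkF hA)).2
  -- distinct cores are disjoint
  have hcoreDisj : ∀ C ∈ Cores, ∀ D ∈ Cores, C ≠ D → Disjoint C D := by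
    intro C hC D hD hCD
    by_contra hnd
    have hint := Finset.not_disjoint_iff_nonempty_inter.1 hnd
    obtain ⟨A, hA, hA1⟩ := (hSmem C).1 ((hCmem C).1 hC).1
    obtain ⟨Bb, hBb, hB1⟩ := (hSmem D).1 ((hCmem D).1 hD).1
    have hint' : (A.1 ∩ Bb.1).Nonempty := by rw [hA1, hB1]; exact hint
    have hinter := (hcross A hA Bb hBb hint').1
    have hCDS : C ∩ D ∈ S := by
      refine (hSmem _).2 ⟨(A.1 ∩ Bb.1, A.2 ∩ Bb.2), hinter, ?_⟩
      simp [hA1, hB1]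
    have h1 : C ∩ D = C := ((hCmem C).1 hC).2 _ hCDS Finset.inter_subset_left
    have h2 : C ∩ D = D := ((hCmem D).1 hD).2 _ hCDS Finset.inter_subset_right
    exact hCD (h1 ▸ h2)
  -- any disjoint packing injects into the cores; surjective when cards match
  have hGcore : ∀ G : Finset (Finset α × Finset α), G ⊆ Fk →
      (G : Set (Finset α × Finset α)).Pairwise (fun A B => Disjoint A.1 B.1) →
      G.card ≤ Cores.card ∧
      (Cores.card ≤ G.card → ∀ C ∈ Cores, ∃ A ∈ G, C ⊆ A.1 ∧
        ∀ D ∈ Cores, D ⊆ A.1 → D = C) := by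
    intro G hGsub hGpd
    have hch : ∀ A : {x // x ∈ G}, ∃ C, C ∈ Cores ∧ C ⊆ A.1.1 := by
      intro A
      obtain ⟨C, hC, hCA⟩ := hcoreEx A.1.1
        ((hSmem _).2 ⟨A.1, hGsub A.2, rfl⟩)
      exact ⟨C, hC, hCA⟩
    choose f hf1 hf2 using hch
    have hinj : Set.InjOn f (G.attach : Set {x // x ∈ G}) := by
      intro a _ b _ hab
      by_contra hne'
      have hne2 : a.1 ≠ b.1 := fun h => hne' (Subtype.ext h)
      have hd : Disjoint a.1.1 b.1.1 := hGpd a.2 b.2 hne2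
      have h1 : f a ⊆ a.1.1 ∩ b.1.1 :=
        Finset.subset_inter (hf2 a) (hab ▸ hf2 b)
      obtain ⟨x, hx⟩ := hcoreNe (f a) (hf1 a)
      have := Finset.not_disjoint_iff_nonempty_inter.2 ⟨x, h1 hx⟩
      exact this hd
    have hsubC : G.attach.image f ⊆ Cores := by
      intro C hC
      obtain ⟨a, _, rfl⟩ := Finset.mem_image.1 hC
      exact hf1 a
    have hcard : (G.attach.image f).card = G.card := by
      rw [Finset.card_image_of_injOn hinj, Finset.card_attach]
    constructor
    · rw [← hcard]; exact Finset.card_le_card hsubC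
    · intro hle C hC
      have heq : G.attach.image f = Cores :=
        Finset.eq_of_subset_of_card_le hsubC (by omega)
      rw [← heq] at hC
      obtain ⟨a, _, rfl⟩ := Finset.mem_image.1 hC
      refine ⟨a.1, a.2, hf2 a, ?_⟩
      intro D hD hDA
      rw [← heq] at hD
      obtain ⟨b, _, rfl⟩ := Finset.mem_image.1 hD
      have hba : b = a := by
        by_contra hne'
        have hne2 : b.1 ≠ a.1 := fun h => hne' (Subtype.ext h)
        have hd : Disjoint b.1.1 a.1.1 := hGpd b.2 a.2 hne2
        obtain ⟨x, hx⟩ := hcoreNe (f b) (hf1 b)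
        exact Finset.not_disjoint_iff_nonempty_inter.2
          ⟨x, Finset.mem_inter.2 ⟨hf2 b hx, hDA hx⟩⟩ hd
      rw [hba]
    -- a packing realizing the cores
  have hnuGe : Cores.card ≤ nuBiset Fk := by
    have hch : ∀ C : {x // x ∈ Cores}, ∃ A, A ∈ Fk ∧ A.1 = C.1 := by
      intro C; exact (hSmem C.1).1 ((hCmem C.1).1 C.2).1
    choose g hg1 hg2 using hch
    have hinj : Set.InjOn g (Cores.attach : Set {x // x ∈ Cores}) := by
      intro a _ b _ hab
      apply Subtype.ext
      rw [← hg2 a, ← hg2 b, hab]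
    set G := Cores.attach.image g with hGdef
    have hGsub : G ⊆ Fk := by
      intro A hA
      obtain ⟨a, _, rfl⟩ := Finset.mem_image.1 hA
      exact hg1 a
    have hGpd : (G : Set (Finset α × Finset α)).Pairwise
        (fun A B => Disjoint A.1 B.1) := by
      intro A hA B hB' hAB
      simp only [hGdef, Finset.coe_image, Set.mem_image] at hA hB'
      obtain ⟨a, _, rfl⟩ := hA
      obtain ⟨b, _, rfl⟩ := hB'
      have hab : a.1 ≠ b.1 := by
        intro h
        exact hAB (congrArg g (Subtype.ext h))
      rw [hg2 a, hg2 b]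
      exact hcoreDisj a.1 a.2 b.1 b.2 hab
    have hcard : G.card = Cores.card := by
      rw [hGdef, Finset.card_image_of_injOn hinj, Finset.card_attach]
    rw [← hcard]
    exact nu_le Fk G hGsub hGpd
  have hnu : nuBiset Fk = Cores.card := by
    obtain ⟨G, hGsub, hGpd, hGcard⟩ := nu_witness Fk
    have := (hGcore G hGsub hGpd).1
    omega
  -- halos
  set halo : Finset α → Finset (Finset α × Finset α) := fun C =>
    Fk.filter (fun A => C ⊆ A.1 ∧ ∀ D ∈ Cores, D ⊆ A.1 → D = C) with hhalodef
  have hhalomem : ∀ C A, A ∈ halo C ↔ A ∈ Fk ∧ C ⊆ A.1 ∧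
      ∀ D ∈ Cores, D ⊆ A.1 → D = C := by
    intro C A; rw [hhalodef]; exact Finset.mem_filter
  have hhalone : ∀ C ∈ Cores, (halo C).Nonempty := by
    intro C hC
    obtain ⟨A, hA, hA1⟩ := (hSmem C).1 ((hCmem C).1 hC).1
    refine ⟨A, (hhalomem C A).2 ⟨hA, le_of_eq hA1.symm, ?_⟩⟩
    intro D hD hDA
    exact ((hCmem C).1 hC).2 D ((hCmem D).1 hD).1 (hA1 ▸ hDA)
  set W : Finset α → Finset α := fun C => (halo C).sup Prod.fst with hWdef
  have hWT : ∀ C ∈ Cores, W C ⊆ T := by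
    intro C _
    refine sup_subset' ?_
    intro A hA
    have hAF := hFkF ((hhalomem C A).1 hA).1
    exact (hB A hAF).1.trans (hB A hAF).2
  -- union of a subfamily of a halo is in F, provided W C is small
  have hUnion : ∀ C ∈ Cores, (W C).card + k + 1 ≤ T.card →
      ∀ H : Finset (Finset α × Finset α), H ⊆ halo C → H.Nonempty →
      (H.sup Prod.fst, H.sup Prod.snd) ∈ F := by
    intro C hC hWc H
    induction H using Finset.induction_on with
    | empty => intro _ h; exact absurd h (by simp)
    | @insert A H hAH ih =>
      intro hsub _
      have hAhalo : A ∈ halo C := hsub (Finset.mem_insert_self A H)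
      have hAFk : A ∈ Fk := ((hhalomem C A).1 hAhalo).1
      have hAF : A ∈ F := hFkF hAFk
      rcases H.eq_empty_or_nonempty with rfl | hHne
      · simpa using hAF
      · have hHsub : H ⊆ halo C := (Finset.subset_insert A H).trans hsub
        have hBF : (H.sup Prod.fst, H.sup Prod.snd) ∈ F := ih hHsub hHne
        obtain ⟨b, hb⟩ := hHne
        have hCb : C ⊆ b.1 := ((hhalomem C b).1 (hHsub hb)).2.1
        have hCsup : C ⊆ H.sup Prod.fst :=
          hCb.trans (subset_sup' hb)
        have hCA : C ⊆ A.1 := ((hhalomem C A).1 hAhalo).2.1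
        obtain ⟨x, hx⟩ := hcoreNe C hC
        have hint : (A.1 ∩ H.sup Prod.fst).Nonempty :=
          ⟨x, Finset.mem_inter.2 ⟨hCA hx, hCsup hx⟩⟩
        have hsubW : A.1 ∪ H.sup Prod.fst ⊆ W C := by
          apply Finset.union_subset
          · exact subset_sup' hAhalo
          · exact sup_subset_sup' hHsub
        have hsz : (A.1 ∪ H.sup Prod.fst).card + k + 1 ≤ T.card := by
          have := Finset.card_le_card hsubW
          omega
        have := (hreg.2 A hAF _ hBF hint hsz).2
        simpa [Finset.sup_insert] using this
  -- each W C has at least |T| - k elements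
  have hWbig : ∀ C ∈ Cores, T.card ≤ (W C).card + k := by
    intro C hC
    by_contra hcon
    have hWc : (W C).card + k + 1 ≤ T.card := by omega
    have hU : (W C, (halo C).sup Prod.snd) ∈ F :=
      hUnion C hC hWc (halo C) (Finset.Subset.refl _) (hhalone C hC)
    set W2 := (halo C).sup Prod.snd with hW2def
    have hW2T : W2 ⊆ T := by
      refine sup_subset' ?_
      intro A hA
      exact (hB A (hFkF ((hhalomem C A).1 hA).1)).2
    have hbd : (W2 \ W C).card ≤ k := hreg.1 _ hU
    have hW2sub : W2 ⊆ (W2 \ W C) ∪ W C := by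
      intro x hx
      by_cases hxW : x ∈ W C
      · exact Finset.mem_union.2 (Or.inr hxW)
      · exact Finset.mem_union.2 (Or.inl (Finset.mem_sdiff.2 ⟨hx, hxW⟩))
    have hW2card : W2.card < T.card := by
      have h1 := Finset.card_le_card hW2sub
      have h2 := Finset.card_union_le (W2 \ W C) (W C)
      omega
    have hssub : W2 ⊂ T := by
      refine Finset.ssubset_iff_subset_ne.2 ⟨hW2T, ?_⟩
      intro h; rw [h] at hW2card; omega
    obtain ⟨v, hvT, hvW2⟩ := Finset.exists_of_ssubset hssub
    obtain ⟨u, hu⟩ := hcoreNe C hC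
    have huT : u ∈ T := hcoreT C hC hu
    have heq := hyp u huT v hvT
    obtain ⟨G', hG'sub, hG'pd, hG'card⟩ :=
      nu_witness (Fk.filter (fun A => ¬ EdgeCovers T (u, v) A))
    rw [heq] at hG'card
    have hG'Fk : G' ⊆ Fk := hG'sub.trans (Finset.filter_subset _ _)
    have hG'card' : Cores.card ≤ G'.card := by omega
    obtain ⟨A, hAG, hCA, honly⟩ := (hGcore G' hG'Fk hG'pd).2 hG'card' C hC
    have hAhalo : A ∈ halo C :=
      (hhalomem C A).2 ⟨hG'Fk hAG, hCA, honly⟩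
    have hA2 : A.2 ⊆ W2 := subset_sup' hAhalo
    have hcov : EdgeCovers T (u, v) A := by
      refine ⟨hCA hu, Finset.mem_sdiff.2 ⟨hvT, fun h => hvW2 (hA2 h)⟩⟩
    have := (Finset.mem_filter.1 (hG'sub hAG)).2
    exact this hcov
  -- the W C are pairwise disjoint
  have hWdisj : ∀ C ∈ Cores, ∀ D ∈ Cores, C ≠ D → Disjoint (W C) (W D) := by
    intro C hC D hD hCD
    by_contra hnd
    obtain ⟨x, hx⟩ := Finset.not_disjoint_iff_nonempty_inter.1 hnd
    rw [Finset.mem_inter] at hx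
    obtain ⟨A, hAhalo, hxA⟩ := Finset.mem_sup.1 hx.1
    obtain ⟨Bb, hBhalo, hxB⟩ := Finset.mem_sup.1 hx.2
    have hAFk : A ∈ Fk := ((hhalomem C A).1 hAhalo).1
    have hBFk : Bb ∈ Fk := ((hhalomem D Bb).1 hBhalo).1
    have hint : (A.1 ∩ Bb.1).Nonempty := ⟨x, Finset.mem_inter.2 ⟨hxA, hxB⟩⟩
    have hinter := (hcross A hAFk Bb hBFk hint).1
    obtain ⟨E, hE, hEsub⟩ := hcoreEx (A.1 ∩ Bb.1)
      ((hSmem _).2 ⟨_, hinter, rfl⟩)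
    have h1 : E = C := ((hhalomem C A).1 hAhalo).2.2 E hE
      (hEsub.trans Finset.inter_subset_left)
    have h2 : E = D := ((hhalomem D Bb).1 hBhalo).2.2 E hE
      (hEsub.trans Finset.inter_subset_right)
    exact hCD (h1 ▸ h2)
  -- final counting
  have hsum : ∑ C ∈ Cores, (W C).card ≤ T.card := by
    rw [← Finset.card_biUnion hWdisj]
    exact Finset.card_le_card (Finset.biUnion_subset.2 hWT)
  have hlower : (T.card - k) * Cores.card ≤ ∑ C ∈ Cores, (W C).card := by
    calc (T.card - k) * Cores.card = ∑ _C ∈ Cores, (T.card - k) := by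
          rw [Finset.sum_const, smul_eq_mul, mul_comm]
      _ ≤ ∑ C ∈ Cores, (W C).card := by
          refine Finset.sum_le_sum ?_
          intro C hC
          have := hWbig C hC
          omega
  rw [show nuBiset (smallPart T k F) = nuBiset Fk from rfl, hnu]
  omega
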